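/- arXiv:1105.0507 — 4 statements merged into one kernel-verified Lean document; each statement's English description precedes it below -/
import Mathlib

section
/- Let Γ be an (n+1)-coloured graph and R = (e,f) a ρ_n-pair of Γ. If Γ₁ is obtained from Γ by a switching of R, then Γ₁ has at most one more connected component than Γ. -/
open Set

/-- An `(n+1)`-coloured graph on vertex set `V`: for each colour `c ∈ {0,…,n}` a
fixed-point-free involution pairing the endpoints of the `c`-coloured edges. -/
structure PCG (n : ℕ) (V : Type) where
  inv : Fin (n + 1) → V → V
  involutive : ∀ c, Function.Involutive (inv c)
  fixedfree : ∀ c v, inv c v ≠ v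

namespace PCG

variable {n : ℕ} {V : Type}

/-- One step along an edge whose colour lies in `B`. -/
def step (Γ : PCG n V) (B : Set (Fin (n + 1))) (a b : V) : Prop :=
  ∃ c ∈ B, Γ.inv c a = b

/-- Reachability in the subgraph of edges whose colours lie in `B`. -/
def reach (Γ : PCG n V) (B : Set (Fin (n + 1))) : V → V → Prop :=
  Relation.ReflTransGen (Γ.step B)

/-- `x` and `y` lie on the same `{c,i}`-bicoloured cycle. -/
def sameCycle (Γ : PCG n V) (c i : Fin (n + 1)) (x y : V) : Prop :=
  Γ.reach {c, i} x y

/-- Number of connected components of the subgraph of colours in `B`. -/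
noncomputable def numComp (Γ : PCG n V) (B : Set (Fin (n + 1))) : ℕ :=
  Nat.card (Quot (Γ.reach B))

/-- Number of connected components of the subgraph of colours in `B`,
restricted to the vertex set `S`. -/
noncomputable def numCompOn (Γ : PCG n V) (B : Set (Fin (n + 1))) (S : Set V) : ℕ :=
  Nat.card (Quot (Relation.ReflTransGen
    (fun a b : S => ∃ c ∈ B, Γ.inv c (a : V) = (b : V))))

/-- The `c`-coloured edges `{x, Γ.inv c x}` and `{y, Γ.inv c y}` are distinct. -/
def EdgesNe (Γ : PCG n V) (c : Fin (n + 1)) (x y : V) : Prop :=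
  y ≠ x ∧ y ≠ Γ.inv c x

/-- A `ρₙ`-pair involving colour `c`, represented by endpoints `x` of `e` and `y` of `f`. -/
def IsRhoN (Γ : PCG n V) (c : Fin (n + 1)) (x y : V) : Prop :=
  Γ.EdgesNe c x y ∧ ∀ i, i ≠ c → Γ.sameCycle c i x y

/-- A `ρ_{n-1}`-pair involving colour `c` and not involving colour `d`. -/
def IsRhoN1 (Γ : PCG n V) (c d : Fin (n + 1)) (x y : V) : Prop :=
  Γ.EdgesNe c x y ∧ d ≠ c ∧ ¬Γ.sameCycle c d x y ∧
    ∀ j, j ≠ c → j ≠ d → Γ.sameCycle c j x y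

/-- `Γ` is rigid: it contains no `ρ`-pairs. -/
def Rigid (Γ : PCG n V) : Prop :=
  (¬∃ c x y, Γ.IsRhoN c x y) ∧ ¬∃ c d x y, Γ.IsRhoN1 c d x y

/-- A `ρ`-pair of maximal type of the `î`-residue containing it: two `c`-coloured
edges (`c ≠ i`) of the same `î`-residue lying on a common `{c,j}`-cycle for every
colour `j` of the residue different from `c`. -/
def IsRhoSubMax (Γ : PCG n V) (i c : Fin (n + 1)) (x y : V) : Prop :=
  c ≠ i ∧ Γ.EdgesNe c x y ∧ Γ.reach {i}ᶜ x y ∧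
    ∀ j, j ≠ c → j ≠ i → Γ.sameCycle c j x y

/-- `Γ'` is obtained from `Γ` by a switching of the pair of `c`-coloured edges at `x` and `y`:
delete the two edges and reconnect the four endpoints in one of the two other ways. -/
def IsSwitch (Γ Γ' : PCG n V) (c : Fin (n + 1)) (x y : V) : Prop :=
  (∀ i, i ≠ c → Γ'.inv i = Γ.inv i) ∧
  (∀ v, v ≠ x → v ≠ y → v ≠ Γ.inv c x → v ≠ Γ.inv c y → Γ'.inv c v = Γ.inv c v) ∧
  ((Γ'.inv c x = y ∧ Γ'.inv c (Γ.inv c x) = Γ.inv c y) ∨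
    (Γ'.inv c x = Γ.inv c y ∧ Γ'.inv c (Γ.inv c x) = y))

/-- The standard (orientation-coherent) switching of a `ρₙ`-pair: with respect to any
proper 2-colouring of any `{c,i}`-bicoloured subgraph, `x = e(0)` gets joined to a vertex
in the opposite class, i.e. to the head `f(1)` of `f`. -/
def IsStdSwitch (Γ Γ' : PCG n V) (c : Fin (n + 1)) (x y : V) : Prop :=
  Γ.IsSwitch Γ' c x y ∧
  ∀ i, i ≠ c → ∀ b : V → Bool, (∀ w, b (Γ.inv c w) ≠ b w) →
    (∀ w, b (Γ.inv i w) ≠ b w) → b (Γ'.inv c x) ≠ b x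

/-- The standard switching of a `ρ_{n-1}`-pair not involving colour `d`: with respect to
any bipartition of the `d̂`-residues, `x = e(0)` gets joined to a vertex of the opposite
class. -/
def IsStdSwitchN1 (Γ Γ' : PCG n V) (c d : Fin (n + 1)) (x y : V) : Prop :=
  Γ.IsSwitch Γ' c x y ∧
  ∀ b : V → Bool, (∀ j, j ≠ d → ∀ w, b (Γ.inv j w) ≠ b w) → b (Γ'.inv c x) ≠ b x

/-- `Γ` is bipartite. -/
def Bipartite (Γ : PCG n V) : Prop :=
  ∃ b : V → Bool, ∀ c v, b (Γ.inv c v) ≠ b v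

/-- `S` is a union of connected components splitting `Γ` into exactly two
connected pieces `S` and `Sᶜ`. -/
def SplitsTwo (Γ : PCG n V) (S : Set V) : Prop :=
  S.Nonempty ∧ Sᶜ.Nonempty ∧ (∀ v ∈ S, ∀ c, Γ.inv c v ∈ S) ∧
  (∀ u ∈ S, ∀ v ∈ S, Γ.reach Set.univ u v) ∧
  (∀ u ∈ Sᶜ, ∀ v ∈ Sᶜ, Γ.reach Set.univ u v)

/-- The geometric realization `|K(Γ)|` of the part of `Γ` spanned by the vertex set `S`:
one `n`-simplex per vertex, glued along the faces opposite to `c` according to the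
`c`-coloured edges. -/
abbrev RealSp (Γ : PCG n V) (S : Set V) : Type :=
  Quot (fun a b : (Σ _ : S, ↥(stdSimplex ℝ (Fin (n + 1)))) =>
    ∃ c : Fin (n + 1), (b.1 : V) = Γ.inv c a.1 ∧ b.2 = a.2 ∧ (a.2 : Fin (n + 1) → ℝ) c = 0)

/-- The geometric realization of the part of the `î`-residue subgraph spanned by `S`:
one `(n-1)`-simplex (with vertices labelled by the colours `≠ i`) per vertex. -/
abbrev ResRealSp (Γ : PCG n V) (i : Fin (n + 1)) (S : Set V) : Type :=
  Quot (fun a b : (Σ _ : S, ↥(stdSimplex ℝ {j : Fin (n + 1) // j ≠ i})) =>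
    ∃ c : {j : Fin (n + 1) // j ≠ i},
      (b.1 : V) = Γ.inv c a.1 ∧ b.2 = a.2 ∧ (a.2 : {j : Fin (n + 1) // j ≠ i} → ℝ) c = 0)

/-- `Γ` is a gem of the space `X`, i.e. `|K(Γ)| ≅ X`. -/
def IsGemOf (Γ : PCG n V) (X : Type) [TopologicalSpace X] : Prop :=
  Nonempty (Γ.RealSp Set.univ ≃ₜ X)

/-- `Γ` is a crystallization of `X`: a gem of `X` all of whose `ĉ`-residue subgraphs
are connected. -/
def IsCrystallization (Γ : PCG n V) (X : Type) [TopologicalSpace X] : Prop :=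
  Γ.IsGemOf X ∧ ∀ c : Fin (n + 1), ∀ u v : V, Γ.reach {c}ᶜ u v

end PCG

/-- The `m`-dimensional sphere. -/
abbrev sphereType (m : ℕ) : Type :=
  ↥(Metric.sphere (0 : EuclideanSpace ℝ (Fin (m + 1))) 1)

/-- `Z` is a closed topological `m`-manifold (possibly disconnected). -/
def IsClosedManifoldN (m : ℕ) (Z : Type) [TopologicalSpace Z] : Prop :=
  T2Space Z ∧ CompactSpace Z ∧
    ∀ z : Z, ∃ U : Set Z, z ∈ U ∧ IsOpen U ∧ Nonempty (U ≃ₜ EuclideanSpace ℝ (Fin m))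

/-- `X` is a connected sum of `X₁` and `X₂` (`m`-dimensional): `X` decomposes into two
pieces, homeomorphic to the complements of open balls in `X₁` and `X₂`, glued along a
sphere. -/
def IsConnSum (m : ℕ) (X X₁ X₂ : Type) [TopologicalSpace X]
    [TopologicalSpace X₁] [TopologicalSpace X₂] : Prop :=
  ∃ (C₁ : Set X₁) (C₂ : Set X₂) (A₁ A₂ : Set X),
    Nonempty (C₁ ≃ₜ (Metric.closedBall (0 : EuclideanSpace ℝ (Fin m)) 1 :
      Set (EuclideanSpace ℝ (Fin m)))) ∧
    Nonempty (C₂ ≃ₜ (Metric.closedBall (0 : EuclideanSpace ℝ (Fin m)) 1 :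
      Set (EuclideanSpace ℝ (Fin m)))) ∧
    A₁ ∪ A₂ = Set.univ ∧
    Nonempty (↥(A₁ ∩ A₂) ≃ₜ (Metric.sphere (0 : EuclideanSpace ℝ (Fin m)) 1 :
      Set (EuclideanSpace ℝ (Fin m)))) ∧
    Nonempty (A₁ ≃ₜ ((interior C₁)ᶜ : Set X₁)) ∧
    Nonempty (A₂ ≃ₜ ((interior C₂)ᶜ : Set X₂))

/-- The twisted `m`-sphere bundle over `S¹`: the mapping torus of a reflection of `Sᵐ`. -/
abbrev TwistedBundle (m : ℕ) : Type :=
  Quot (fun a b : sphereType m × ℝ =>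
    b.2 = a.2 + 1 ∧ (b.1 : EuclideanSpace ℝ (Fin (m + 1))) =
      fun i => if i = 0 then -((a.1 : EuclideanSpace ℝ (Fin (m + 1))) i)
               else (a.1 : EuclideanSpace ℝ (Fin (m + 1))) i)

/-- A handle of dimension `n`: `S^{n-1} × S¹` or the twisted `S^{n-1}`-bundle over `S¹`. -/
def IsHandleDim (n : ℕ) (H : Type) [TopologicalSpace H] : Prop :=
  Nonempty (H ≃ₜ sphereType (n - 1) × sphereType 1) ∨ Nonempty (H ≃ₜ TwistedBundle (n - 1))

/-- `X` is handle-free: it is not a connected sum of anything with a handle. -/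
def HandleFree (n : ℕ) (X : Type) [TopologicalSpace X] : Prop :=
  ¬∃ (Y H : Type) (_ : TopologicalSpace Y) (_ : TopologicalSpace H),
    IsHandleDim n H ∧ IsConnSum n X Y H

section Aux

open Relation

private lemma eqvGen_rtg {α : Type*} (s : α → α → Prop) {u v : α} :
    Relation.EqvGen (Relation.ReflTransGen s) u v ↔ Relation.EqvGen s u v := by
  constructor
  · intro h
    induction h with
    | rel a b hab =>
      induction hab with
      | refl => exact Relation.EqvGen.refl _
      | tail _ h ih => exact Relation.EqvGen.trans _ _ _ ih (Relation.EqvGen.rel _ _ h)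
    | refl a => exact Relation.EqvGen.refl _
    | symm a b _ ih => exact Relation.EqvGen.symm _ _ ih
    | trans a b c _ _ ih1 ih2 => exact Relation.EqvGen.trans _ _ _ ih1 ih2
  · intro h
    exact Relation.EqvGen.mono (fun a b hab => Relation.ReflTransGen.single hab) _ _ h

private lemma decompAux {α : Type*} (s : α → α → Prop) (a0 b0 : α) {u v : α}
    (h : Relation.EqvGen (fun p q => s p q ∨ (p = a0 ∧ q = b0)) u v) :
    Relation.EqvGen s u v ∨ (Relation.EqvGen s u a0 ∧ Relation.EqvGen s b0 v) ∨
      (Relation.EqvGen s u b0 ∧ Relation.EqvGen s a0 v) := by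
  induction h with
  | rel a b hab =>
    rcases hab with h | ⟨rfl, rfl⟩
    · exact Or.inl (Relation.EqvGen.rel _ _ h)
    · exact Or.inr (Or.inl ⟨Relation.EqvGen.refl _, Relation.EqvGen.refl _⟩)
  | refl a => exact Or.inl (Relation.EqvGen.refl _)
  | symm a b _ ih =>
    rcases ih with h | ⟨h1, h2⟩ | ⟨h1, h2⟩
    · exact Or.inl (Relation.EqvGen.symm _ _ h)
    · exact Or.inr (Or.inr ⟨Relation.EqvGen.symm _ _ h2, Relation.EqvGen.symm _ _ h1⟩)
    · exact Or.inr (Or.inl ⟨Relation.EqvGen.symm _ _ h2, Relation.EqvGen.symm _ _ h1⟩)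
  | trans a b c _ _ ih1 ih2 =>
    rcases ih1 with h | ⟨h1, h2⟩ | ⟨h1, h2⟩ <;>
      rcases ih2 with h' | ⟨h1', h2'⟩ | ⟨h1', h2'⟩
    · exact Or.inl (Relation.EqvGen.trans _ _ _ h h')
    · exact Or.inr (Or.inl ⟨Relation.EqvGen.trans _ _ _ h h1', h2'⟩)
    · exact Or.inr (Or.inr ⟨Relation.EqvGen.trans _ _ _ h h1', h2'⟩)
    · exact Or.inr (Or.inl ⟨h1, Relation.EqvGen.trans _ _ _ h2 h'⟩)
    · exact Or.inl (Relation.EqvGen.trans _ _ _ h1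
        (Relation.EqvGen.trans _ _ _
          (Relation.EqvGen.symm _ _ (Relation.EqvGen.trans _ _ _ h2 h1')) h2'))
    · exact Or.inl (Relation.EqvGen.trans _ _ _ h1 h2')
    · exact Or.inr (Or.inr ⟨h1, Relation.EqvGen.trans _ _ _ h2 h'⟩)
    · exact Or.inl (Relation.EqvGen.trans _ _ _ h1 h2')
    · exact Or.inl (Relation.EqvGen.trans _ _ _ h1
        (Relation.EqvGen.trans _ _ _
          (Relation.EqvGen.symm _ _ (Relation.EqvGen.trans _ _ _ h2 h1')) h2'))

end Aux

/-- Switching a `ρₙ`-pair produces at most one more connected component. -/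
theorem stmt2 {n : ℕ} {V : Type} [Fintype V] (Γ Γ₁ : PCG n V) (c : Fin (n + 1)) (x y : V)
    (hR : Γ.IsRhoN c x y) (hS : Γ.IsSwitch Γ₁ c x y) :
    Γ₁.numComp Set.univ ≤ Γ.numComp Set.univ + 1 := by
  classical
  obtain ⟨hcol, hfar, hnew⟩ := hS
  -- notation
  set x' := Γ.inv c x with hx'
  set y' := Γ.inv c y with hy'
  set s1 : V → V → Prop := Γ₁.step Set.univ with hs1
  set t : V → V → Prop := fun p q => s1 p q ∨ (p = x ∧ q = x') with ht
  have hxx' : Relation.EqvGen t x x' := Relation.EqvGen.rel _ _ (Or.inr ⟨rfl, rfl⟩)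
  -- y is connected to y' through the new edges
  have hyy' : Relation.EqvGen t y y' := by
    rcases hnew with ⟨h1, h2⟩ | ⟨h1, h2⟩
    · have hyx : s1 y x := ⟨c, Set.mem_univ _, by rw [← h1]; exact Γ₁.involutive c x⟩
      have hx'y' : s1 x' y' := ⟨c, Set.mem_univ _, h2⟩
      exact Relation.EqvGen.trans _ _ _ (Relation.EqvGen.rel _ _ (Or.inl hyx))
        (Relation.EqvGen.trans _ _ _ hxx' (Relation.EqvGen.rel _ _ (Or.inl hx'y')))
    · have hyx' : s1 y x' := ⟨c, Set.mem_univ _, by rw [← h2]; exact Γ₁.involutive c x'⟩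
      have hxy' : s1 x y' := ⟨c, Set.mem_univ _, h1⟩
      exact Relation.EqvGen.trans _ _ _ (Relation.EqvGen.rel _ _ (Or.inl hyx'))
        (Relation.EqvGen.trans _ _ _ (Relation.EqvGen.symm _ _ hxx')
          (Relation.EqvGen.rel _ _ (Or.inl hxy')))
  -- every edge of Γ gives a connection in t
  have hstep : ∀ a b, Γ.step Set.univ a b → Relation.EqvGen t a b := by
    rintro a b ⟨i, -, hib⟩
    by_cases hic : i = c
    · subst hic
      by_cases hax : a = x
      · subst hax; rw [← hib]; exact hxx'
      by_cases hay : a = y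
      · subst hay; rw [← hib]; exact hyy'
      by_cases hax' : a = x'
      · subst hax'
        have : Γ.inv i x' = x := Γ.involutive i x
        rw [← hib, this]
        exact Relation.EqvGen.symm _ _ hxx'
      by_cases hay' : a = y'
      · subst hay'
        have : Γ.inv i y' = y := Γ.involutive i y
        rw [← hib, this]
        exact Relation.EqvGen.symm _ _ hyy'
      · exact Relation.EqvGen.rel _ _ (Or.inl ⟨i, Set.mem_univ _,
          by rw [hfar a hax hay hax' hay']; exact hib⟩)
    · exact Relation.EqvGen.rel _ _ (Or.inl ⟨i, Set.mem_univ _,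
        by rw [hcol i hic]; exact hib⟩)
  -- surjection from components of Γ to components of t
  have hmkΓ : ∀ a b, Γ.reach Set.univ a b → Quot.mk t a = Quot.mk t b := by
    intro a b h
    induction h with
    | refl => rfl
    | tail _ hstep' ih => exact ih.trans (Quot.eqvGen_sound (hstep _ _ hstep'))
  let f : Quot (Γ.reach Set.univ) → Quot t := Quot.lift (Quot.mk t) hmkΓ
  have hf : Function.Surjective f := by
    intro q
    obtain ⟨v, rfl⟩ := Quot.exists_rep q
    exact ⟨Quot.mk _ v, rfl⟩
  -- map from components of Γ₁ to components of t
  have hmk1 : ∀ a b, Γ₁.reach Set.univ a b → Quot.mk t a = Quot.mk t b := by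
    intro a b h
    induction h with
    | refl => rfl
    | tail _ hstep' ih => exact ih.trans (Quot.sound (Or.inl hstep'))
  let g : Quot (Γ₁.reach Set.univ) → Quot t := Quot.lift (Quot.mk t) hmk1
  -- the almost-injective combined map
  let G : Quot (Γ₁.reach Set.univ) → Option (Quot t) := fun p =>
    if p = Quot.mk _ x' then none else some (g p)
  have hGinj : Function.Injective G := by
    intro p q hpq
    by_cases hp : p = Quot.mk _ x' <;> by_cases hq : q = Quot.mk _ x'
    · rw [hp, hq]
    · simp only [G, if_pos hp, if_neg hq] at hpq
      exact absurd hpq (by simp)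
    · simp only [G, if_neg hp, if_pos hq] at hpq
      exact absurd hpq (by simp)
    · simp only [G, if_neg hp, if_neg hq, Option.some.injEq] at hpq
      -- g p = g q with p, q ≠ [x']
      obtain ⟨u, rfl⟩ := Quot.exists_rep p
      obtain ⟨v, rfl⟩ := Quot.exists_rep q
      have hguv : Quot.mk t u = Quot.mk t v := by
        simpa [g] using hpq
      have hEq : Relation.EqvGen t u v := Quot.eq.mp hguv
      have hq1 : ∀ a b : V, Relation.EqvGen s1 a b →
          Quot.mk (Γ₁.reach Set.univ) a = Quot.mk (Γ₁.reach Set.univ) b := by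
        intro a b h
        exact Quot.eq.mpr ((eqvGen_rtg _).mpr h)
      rcases decompAux s1 x x' hEq with h | ⟨h1, h2⟩ | ⟨h1, h2⟩
      · exact hq1 _ _ h
      · exact absurd ((hq1 _ _ h2).symm) hq
      · exact absurd ((hq1 _ _ h1)) hp
  -- count
  haveI : Finite (Quot t) := Quot.finite t
  haveI := Fintype.ofFinite (Quot t)
  haveI : Finite (Quot (Γ.reach Set.univ)) := Quot.finite _
  haveI : Finite (Quot (Γ₁.reach Set.univ)) := Quot.finite _
  calc Γ₁.numComp Set.univ = Nat.card (Quot (Γ₁.reach Set.univ)) := rfl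
    _ ≤ Nat.card (Option (Quot t)) := Nat.card_le_card_of_injective G hGinj
    _ = Nat.card (Quot t) + 1 := Finite.card_option
    _ ≤ Nat.card (Quot (Γ.reach Set.univ)) + 1 := by
        exact Nat.add_le_add_right (Nat.card_le_card_of_surjective f hf) 1
    _ = Γ.numComp Set.univ + 1 := rfl
end

section
/- Let n ≥ 3, and let Γ be an (n+1)-coloured graph all of whose residues (components of the subgraphs obtained by deleting one colour class) are bipartite. Let R = (e,f) be a ρ_n-pair involving colour c, orient e arbitrarily, and for each colour i ≠ c let the orientation of f be the one induced by coherently orienting the bicoloured cycle Γ_{c,i}(e). Then the induced orientation of f is independent of the choice of the colour i ≠ c. -/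
open Set

/-- Let `n ≥ 3` and let `Γ` be an `(n+1)`-coloured graph all of whose
residues are bipartite.  Let `R = (e,f)` be a `ρₙ`-pair involving colour `c`, with
`e = {x, Γ.inv c x}` oriented from its tail `x = e(0)`, and `f = {y, Γ.inv c y}`.
For a colour `i ≠ c`, the tail of `f` induced by coherently orienting the bicoloured
cycle `Γ_{c,i}(e)` is the endpoint `t` of `f` lying, with respect to every proper
2-colouring of the `{c,i}`-coloured subgraph, in the same class as `x`.  Then this
induced tail is independent of the choice of the colour `i ≠ c`. -/
theorem stmt4 {n : ℕ} {V : Type} [Fintype V] (hn : 3 ≤ n) (Γ : PCG n V)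
    (hres : ∀ k : Fin (n + 1), ∃ b : V → Bool, ∀ j, j ≠ k → ∀ w, b (Γ.inv j w) ≠ b w)
    (c : Fin (n + 1)) (x y : V) (hR : Γ.IsRhoN c x y) :
    ∀ i j, i ≠ c → j ≠ c → ∀ t t' : V,
      ((t = y ∨ t = Γ.inv c y) ∧ ∀ b : V → Bool, (∀ w, b (Γ.inv c w) ≠ b w) →
        (∀ w, b (Γ.inv i w) ≠ b w) → b t = b x) →
      ((t' = y ∨ t' = Γ.inv c y) ∧ ∀ b : V → Bool, (∀ w, b (Γ.inv c w) ≠ b w) →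
        (∀ w, b (Γ.inv j w) ≠ b w) → b t' = b x) →
      t = t' := by
  intro i j hi hj t t' ht ht'
  -- choose a colour k different from i, j, c
  have hne : (({i, j, c} : Finset (Fin (n + 1)))ᶜ).Nonempty := by
    rw [← Finset.card_pos, Finset.card_compl]
    have h3 : ({i, j, c} : Finset (Fin (n + 1))).card ≤ 3 := by
      refine le_trans (Finset.card_insert_le _ _) ?_
      have := Finset.card_insert_le j ({c} : Finset (Fin (n + 1)))
      simp at this ⊢
      omega
    simp only [Fintype.card_fin]
    omega
  obtain ⟨k, hk⟩ := hne
  simp only [Finset.mem_compl, Finset.mem_insert, Finset.mem_singleton, not_or] at hk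
  obtain ⟨hki, hkj, hkc⟩ := hk
  obtain ⟨b, hb⟩ := hres k
  have hbc : ∀ w, b (Γ.inv c w) ≠ b w := hb c (fun h => hkc h.symm)
  have hbi : ∀ w, b (Γ.inv i w) ≠ b w := hb i (fun h => hki h.symm)
  have hbj : ∀ w, b (Γ.inv j w) ≠ b w := hb j (fun h => hkj h.symm)
  have h1 : b t = b x := ht.2 b hbc hbi
  have h2 : b t' = b x := ht'.2 b hbc hbj
  rcases ht.1 with h | h <;> rcases ht'.1 with h' | h'
  · rw [h, h']
  · exfalso; rw [h] at h1; rw [h'] at h2; exact hbc y (h2.trans h1.symm)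
  · exfalso; rw [h] at h1; rw [h'] at h2; exact hbc y (h1.trans h2.symm)
  · rw [h, h']
end

section
/- An (n+1)-coloured graph Γ, n ≥ 3, is rigid (contains no ρ-pairs) if and only if for every colour i ∈ {0,...,n}, no î-residue of Γ contains a ρ_{n−1}-pair. -/
open Set

lemma PCG.reach_mono {n : ℕ} {V : Type} {Γ : PCG n V} {A B : Set (Fin (n + 1))}
    (h : A ⊆ B) {x y : V} (r : Γ.reach A x y) : Γ.reach B x y :=
  Relation.ReflTransGen.mono (p := Γ.step B) (fun _ _ ⟨c, hc, he⟩ => ⟨c, h hc, he⟩) x y r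

lemma exists_third {n : ℕ} (hn : 3 ≤ n) (c i : Fin (n + 1)) :
    ∃ j : Fin (n + 1), j ≠ c ∧ j ≠ i := by
  by_contra h
  push_neg at h
  have hsub : (Finset.univ : Finset (Fin (n + 1))) ⊆ {c, i} := by
    intro j _
    rcases eq_or_ne j c with hc | hc
    · simp [hc]
    · simp [h j hc]
  have hcard := Finset.card_le_card hsub
  have h2 : ({c, i} : Finset (Fin (n + 1))).card ≤ 2 :=
    (Finset.card_insert_le _ _).trans (by simp)
  simp [Finset.card_univ] at hcard
  omega

/-- An `(n+1)`-coloured graph `Γ`, `n ≥ 3`, is rigid (contains no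
`ρ`-pairs) iff for every colour `i`, no `î`-residue of `Γ` contains a `ρ_{n-1}`-pair
(i.e. a `ρ`-pair of maximal type of the `n`-coloured residue). -/
theorem stmt13 {n : ℕ} {V : Type} [Fintype V] (hn : 3 ≤ n) (Γ : PCG n V) :
    Γ.Rigid ↔ ∀ (i c : Fin (n + 1)) (x y : V), ¬Γ.IsRhoSubMax i c x y := by
  constructor
  · rintro ⟨hN, hN1⟩ i c x y ⟨hci, hE, _, hall⟩
    by_cases hs : Γ.sameCycle c i x y
    · refine hN ⟨c, x, y, hE, fun j hj => ?_⟩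
      rcases eq_or_ne j i with rfl | hji
      · exact hs
      · exact hall j hj hji
    · exact hN1 ⟨c, i, x, y, hE, Ne.symm hci, hs, hall⟩
  · intro h
    constructor
    · rintro ⟨c, x, y, hE, hall⟩
      obtain ⟨i, hic, -⟩ := exists_third hn c c
      obtain ⟨j, hjc, hji⟩ := exists_third hn c i
      refine h i c x y ⟨Ne.symm hic, hE, ?_, fun j hj _ => hall j hj⟩
      refine PCG.reach_mono ?_ (hall j hjc)
      intro a ha
      rcases ha with rfl | ha
      · exact Ne.symm hic
      · simp only [Set.mem_singleton_iff] at ha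
        subst ha
        exact hji
    · rintro ⟨c, d, x, y, hE, hdc, _, hall⟩
      obtain ⟨j, hjc, hjd⟩ := exists_third hn c d
      refine h d c x y ⟨Ne.symm hdc, hE, ?_, hall⟩
      refine PCG.reach_mono ?_ (hall j hjc hjd)
      intro a ha
      rcases ha with rfl | ha
      · exact Ne.symm hdc
      · simp only [Set.mem_singleton_iff] at ha
        subst ha
        exact hjd
end

section
/- Let Γ be an (n+1)-coloured graph in which, for every colour i, all î-residues are bipartite, and let R = (e,f) be a ρ_{n−1}-pair involving colour c and not involving colour d. Then e and f lie in the same d̂-residue Ξ of Γ, and Ξ being bipartite determines a canonical switching of R (joining tail of e to head of f and head of e to tail of f with respect to the bipartition of Ξ). -/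
open Set

private lemma keyAux {n : ℕ} {V : Type} (Γ : PCG n V) (d : Fin (n + 1))
    (b b' : V → Bool) (hb : ∀ j, j ≠ d → ∀ w, b (Γ.inv j w) ≠ b w)
    (hb' : ∀ j, j ≠ d → ∀ w, b' (Γ.inv j w) ≠ b' w)
    {u v : V} (h : Γ.reach {d}ᶜ u v) : (b v = b u) ↔ (b' v = b' u) := by
  induction h with
  | refl => simp
  | tail hr hs ih =>
    rename_i w v'
    obtain ⟨j, hj, rfl⟩ := hs
    have hjd : j ≠ d := by simpa using hj
    have h1 := hb j hjd w
    have h2 := hb' j hjd w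
    revert ih h1 h2
    cases hb1 : b (Γ.inv j w) <;> cases hb2 : b w <;> cases hb3 : b u <;>
      cases hb4 : b' (Γ.inv j w) <;> cases hb5 : b' w <;> cases hb6 : b' u <;> simp

/-- Switch the `c`-coloured edges at `x` and `z` by conjugating with `swap x z`. -/
private def switchAt {n : ℕ} {V : Type} [DecidableEq V] (Γ : PCG n V) (c : Fin (n + 1))
    (x z : V) : PCG n V where
  inv i v := if i = c then Equiv.swap x z (Γ.inv c (Equiv.swap x z v)) else Γ.inv i v
  involutive := by
    intro i v
    dsimp only
    by_cases h : i = c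
    · rw [if_pos h, if_pos h, Equiv.swap_apply_self, Γ.involutive c, Equiv.swap_apply_self]
    · rw [if_neg h, if_neg h]
      exact Γ.involutive i v
  fixedfree := by
    intro i v
    by_cases h : i = c
    · rw [if_pos h]
      intro hcon
      have hfix : Γ.inv c (Equiv.swap x z v) = Equiv.swap x z v := by
        have := congrArg (Equiv.swap x z) hcon
        rwa [Equiv.swap_apply_self] at this
      exact Γ.fixedfree c _ hfix
    · rw [if_neg h]
      exact Γ.fixedfree i v

private lemma switchAt_inv {n : ℕ} {V : Type} [DecidableEq V] (Γ : PCG n V)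
    (c : Fin (n + 1)) (x z : V) (i : Fin (n + 1)) (v : V) :
    (switchAt Γ c x z).inv i v =
      if i = c then Equiv.swap x z (Γ.inv c (Equiv.swap x z v)) else Γ.inv i v := rfl

/-- Let `Γ` be an `(n+1)`-coloured graph all of whose residues are
bipartite, and let `R = (e,f)` be a `ρ_{n-1}`-pair involving colour `c` and not
involving colour `d`, with `e = {x, Γ.inv c x}` and `f = {y, Γ.inv c y}`.  Then `e` and
`f` lie in the same `d̂`-residue `Ξ` of `Γ`, and the bipartition of `Ξ` determines a
canonical switching of `R`: the relative classes of the endpoints with respect to any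
bipartition of the `d̂`-residues are well defined, and there is a switching joining the
tail of `e` to the head of `f` and the head of `e` to the tail of `f`. -/
theorem stmt18 {n : ℕ} {V : Type} [Fintype V] (hn : 2 ≤ n) (Γ : PCG n V)
    (hres : ∀ k : Fin (n + 1), ∃ b : V → Bool, ∀ j, j ≠ k → ∀ w, b (Γ.inv j w) ≠ b w)
    (c d : Fin (n + 1)) (x y : V) (hR : Γ.IsRhoN1 c d x y) :
    Γ.reach {d}ᶜ x y ∧
    (∀ b b' : V → Bool, (∀ j, j ≠ d → ∀ w, b (Γ.inv j w) ≠ b w) →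
      (∀ j, j ≠ d → ∀ w, b' (Γ.inv j w) ≠ b' w) → ((b y = b x) ↔ (b' y = b' x))) ∧
    ∃ Γ' : PCG n V, Γ.IsStdSwitchN1 Γ' c d x y := by
  classical
  obtain ⟨⟨hyx, hyx'⟩, hdc, hnd, hall⟩ := hR
  -- find a colour different from both c and d
  have hj : ∃ j : Fin (n + 1), j ≠ c ∧ j ≠ d := by
    by_contra h
    push_neg at h
    have hsub : (Finset.univ : Finset (Fin (n + 1))) ⊆ {c, d} := by
      intro j _
      simp only [Finset.mem_insert, Finset.mem_singleton]
      rcases eq_or_ne j c with h1 | h1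
      · exact Or.inl h1
      · exact Or.inr (h j h1)
    have h1 := Finset.card_le_card hsub
    have h2 : ({c, d} : Finset (Fin (n + 1))).card ≤ 2 := by
      apply le_trans (Finset.card_insert_le _ _)
      simp
    simp only [Finset.card_univ, Fintype.card_fin] at h1
    omega
  obtain ⟨j, hjc, hjd⟩ := hj
  have hreach : Γ.reach {d}ᶜ x y := by
    refine Relation.ReflTransGen.mono ?_ _ _ (hall j hjc hjd)
    rintro a b ⟨k, hk, he⟩
    refine ⟨k, ?_, he⟩
    simp only [Set.mem_insert_iff, Set.mem_singleton_iff] at hk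
    rcases hk with rfl | rfl
    · simpa using hdc.symm
    · simpa using hjd
  refine ⟨hreach, fun b b' hb hb' => keyAux Γ d b b' hb hb' hreach, ?_⟩
  -- basic distinctness facts
  have hxx' : Γ.inv c x ≠ x := Γ.fixedfree c x
  have hyy' : Γ.inv c y ≠ y := Γ.fixedfree c y
  have hy'x : Γ.inv c y ≠ x := by
    intro h
    apply hyx'
    have := congrArg (Γ.inv c) h
    rwa [Γ.involutive c] at this
  have hy'x' : Γ.inv c y ≠ Γ.inv c x := fun h => hyx ((Γ.involutive c).injective h)
  obtain ⟨b₀, hb₀⟩ := hres d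
  set z := if b₀ y = b₀ x then y else Γ.inv c y with hzdef
  have hzx : z ≠ x := by rw [hzdef]; split <;> assumption
  have hzx' : z ≠ Γ.inv c x := by
    rw [hzdef]; split
    · exact hyx'
    · exact hy'x'
  have hgzx : Γ.inv c z ≠ x := by
    rw [hzdef]; split
    · exact hy'x
    · rw [Γ.involutive c]; exact hyx
  have hAx : (switchAt Γ c x z).inv c x = Γ.inv c z := by
    rw [switchAt_inv, if_pos rfl, Equiv.swap_apply_left,
      Equiv.swap_apply_of_ne_of_ne hgzx (Γ.fixedfree c z)]
  have hAx' : (switchAt Γ c x z).inv c (Γ.inv c x) = z := by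
    rw [switchAt_inv, if_pos rfl, Equiv.swap_apply_of_ne_of_ne hxx' (Ne.symm hzx'),
      Γ.involutive c, Equiv.swap_apply_left]
  refine ⟨switchAt Γ c x z, ⟨?_, ?_, ?_⟩, ?_⟩
  · -- colours other than c unchanged
    intro i hi
    funext v
    rw [switchAt_inv, if_neg hi]
  · -- vertices away from the four endpoints unchanged
    intro v hvx hvy hvx' hvy'
    rw [switchAt_inv, if_pos rfl]
    have hvz : v ≠ z := by
      rw [hzdef]; split <;> assumption
    rw [Equiv.swap_apply_of_ne_of_ne hvx hvz]
    have h1 : Γ.inv c v ≠ x := by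
      intro h; apply hvx'
      have := congrArg (Γ.inv c) h
      rwa [Γ.involutive c] at this
    have h2 : Γ.inv c v ≠ z := by
      rw [hzdef]; split
      · intro h; apply hvy'
        have := congrArg (Γ.inv c) h
        rwa [Γ.involutive c] at this
      · intro h; exact hvy ((Γ.involutive c).injective h)
    rw [Equiv.swap_apply_of_ne_of_ne h1 h2]
  · -- the reconnection pattern
    by_cases hcase : b₀ y = b₀ x
    · right
      constructor
      · rw [hAx, hzdef, if_pos hcase]
      · rw [hAx', hzdef, if_pos hcase]
    · left
      constructor
      · rw [hAx, hzdef, if_neg hcase, Γ.involutive c]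
      · rw [hAx', hzdef, if_neg hcase]
  · -- the standard-switch property
    intro b hb
    have hkey : (b y = b x) ↔ (b₀ y = b₀ x) := keyAux Γ d b b₀ hb hb₀ hreach
    rw [hAx]
    by_cases hcase : b₀ y = b₀ x
    · rw [hzdef, if_pos hcase]
      have h2 : b y = b x := hkey.mpr hcase
      rw [← h2]
      exact hb c hdc.symm y
    · rw [hzdef, if_neg hcase, Γ.involutive c]
      intro h
      exact hcase (hkey.mp h)
end
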